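/- arXiv:2309.04330 — 2 statements merged into one kernel-verified Lean document; each statement's English description precedes it below -/
import Mathlib

section
/- For every p > 1 there exists a constant C_p > 0 such that for all t ∈ (0,1], ∫_{-π}^{π} |G(t,y)|^{p/(p-1)} dy ≤ C_p · t^{-1/(2(p-1))}. -/
open Real MeasureTheory

/-- The periodic heat kernel on `[-π, π]` used in the paper:
`G(t,x) = 1/√(2π) + Σ_{k=1}^∞ √(2/π) e^{-k² t} cos(k x)`. -/
noncomputable def G (t x : ℝ) : ℝ :=
  1 / Real.sqrt (2 * Real.pi) +
    ∑' k : ℕ, Real.sqrt (2 / Real.pi) * Real.exp (-((k : ℝ) + 1) ^ 2 * t) *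
      Real.cos (((k : ℝ) + 1) * x)

lemma summable_exp_aux {t : ℝ} (ht : 0 < t) :
    Summable (fun k : ℕ => Real.exp (-((k : ℝ) + 1) ^ 2 * t)) := by
  refine Summable.of_nonneg_of_le (fun k => (Real.exp_pos _).le) (fun k => ?_)
    (summable_geometric_of_lt_one (Real.exp_pos (-t)).le (Real.exp_lt_one_iff.mpr (by linarith)))
  rw [← Real.exp_nat_mul]
  apply Real.exp_le_exp.mpr
  have hk0 : (0:ℝ) ≤ (k:ℝ) := Nat.cast_nonneg k
  nlinarith [sq_nonneg ((k:ℝ)+1), mul_nonneg (mul_nonneg hk0 hk0) ht.le, mul_nonneg hk0 ht.le]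

lemma tsum_exp_le_aux {t : ℝ} (ht : 0 < t) :
    (∑' k : ℕ, Real.exp (-((k : ℝ) + 1) ^ 2 * t)) ≤ Real.exp 4⁻¹ / Real.sqrt t := by
  have hs : 0 < Real.sqrt t := Real.sqrt_pos.mpr ht
  set r : ℝ := Real.exp (-Real.sqrt t) with hr
  have hr0 : 0 < r := Real.exp_pos _
  have hr1 : r < 1 := Real.exp_lt_one_iff.mpr (by linarith)
  have hterm : ∀ k : ℕ, Real.exp (-((k : ℝ) + 1) ^ 2 * t) ≤ Real.exp 4⁻¹ * r ^ (k + 1) := by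
    intro k
    rw [hr, ← Real.exp_nat_mul, ← Real.exp_add]
    apply Real.exp_le_exp.mpr
    have hk0 : (0:ℝ) ≤ (k:ℝ) := Nat.cast_nonneg k
    have hsq : Real.sqrt t ^ 2 = t := Real.sq_sqrt ht.le
    push_cast
    nlinarith [sq_nonneg (((k:ℝ)+1) * Real.sqrt t - 1/2)]
  have hsum : Summable (fun k : ℕ => Real.exp 4⁻¹ * r ^ (k + 1)) := by
    apply Summable.mul_left
    exact (summable_geometric_of_lt_one hr0.le hr1).comp_injective (add_left_injective 1)
  calc (∑' k : ℕ, Real.exp (-((k : ℝ) + 1) ^ 2 * t))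
      ≤ ∑' k : ℕ, Real.exp 4⁻¹ * r ^ (k + 1) :=
        Summable.tsum_le_tsum hterm (summable_exp_aux ht) hsum
    _ = Real.exp 4⁻¹ * ((1 - r)⁻¹ * r) := by
        rw [tsum_mul_left]
        congr 1
        simp_rw [pow_succ]
        rw [tsum_mul_right, tsum_geometric_of_lt_one hr0.le hr1]
    _ ≤ Real.exp 4⁻¹ / Real.sqrt t := by
        rw [div_eq_mul_inv]
        apply mul_le_mul_of_nonneg_left _ (Real.exp_pos _).le
        rw [inv_mul_le_iff₀ (by linarith)]
        have key : r * (1 + Real.sqrt t) ≤ 1 := by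
          rw [hr, Real.exp_neg, inv_mul_le_iff₀ (Real.exp_pos _), mul_one]
          have := Real.add_one_le_exp (Real.sqrt t)
          linarith
        rw [← sub_nonneg]
        have h2 : (1 - r) * (√t)⁻¹ - r = (√t)⁻¹ * (1 - r - r * √t) := by
          field_simp
        rw [h2]
        have h3 : 0 ≤ 1 - r - r * √t := by nlinarith
        positivity

lemma term_abs_le {t : ℝ} (k : ℕ) (x : ℝ) :
    ‖Real.sqrt (2 / Real.pi) * Real.exp (-((k : ℝ) + 1) ^ 2 * t) *
      Real.cos (((k : ℝ) + 1) * x)‖ ≤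
      Real.sqrt (2 / Real.pi) * Real.exp (-((k : ℝ) + 1) ^ 2 * t) := by
  rw [Real.norm_eq_abs, abs_mul, abs_mul, abs_of_nonneg (Real.sqrt_nonneg _),
    abs_of_nonneg (Real.exp_pos _).le]
  have h := abs_cos_le_one (((k : ℝ) + 1) * x)
  have h2 : (0:ℝ) ≤ Real.sqrt (2 / Real.pi) * Real.exp (-((k : ℝ) + 1) ^ 2 * t) := by positivity
  nlinarith

lemma summable_term {t : ℝ} (ht : 0 < t) (x : ℝ) :
    Summable (fun k : ℕ => Real.sqrt (2 / Real.pi) * Real.exp (-((k : ℝ) + 1) ^ 2 * t) *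
      Real.cos (((k : ℝ) + 1) * x)) :=
  Summable.of_norm_bounded ((summable_exp_aux ht).mul_left _) (fun k => term_abs_le k x)

lemma continuous_G {t : ℝ} (ht : 0 < t) : Continuous (G t) := by
  apply Continuous.add continuous_const
  exact continuous_tsum (fun k => by fun_prop) ((summable_exp_aux ht).mul_left _)
    (fun k x => term_abs_le k x)

lemma G_le {t : ℝ} (ht : 0 < t) (ht1 : t ≤ 1) (x : ℝ) :
    G t x ≤ (1 / Real.sqrt (2 * Real.pi) + Real.sqrt (2 / Real.pi) * Real.exp 4⁻¹)
      / Real.sqrt t := by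
  have hs : 0 < Real.sqrt t := Real.sqrt_pos.mpr ht
  have hs1 : Real.sqrt t ≤ 1 := by
    rw [show (1:ℝ) = Real.sqrt 1 by simp]
    exact Real.sqrt_le_sqrt ht1
  have h1 : (∑' k : ℕ, Real.sqrt (2 / Real.pi) * Real.exp (-((k : ℝ) + 1) ^ 2 * t) *
      Real.cos (((k : ℝ) + 1) * x)) ≤
      Real.sqrt (2 / Real.pi) * (Real.exp 4⁻¹ / Real.sqrt t) := by
    calc _ ≤ ∑' k : ℕ, Real.sqrt (2 / Real.pi) * Real.exp (-((k : ℝ) + 1) ^ 2 * t) := by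
            apply Summable.tsum_le_tsum _ (summable_term ht x) ((summable_exp_aux ht).mul_left _)
            intro k
            exact (le_abs_self _).trans (term_abs_le k x)
      _ = Real.sqrt (2 / Real.pi) * ∑' k : ℕ, Real.exp (-((k : ℝ) + 1) ^ 2 * t) :=
            tsum_mul_left
      _ ≤ _ := by
            exact mul_le_mul_of_nonneg_left (tsum_exp_le_aux ht) (Real.sqrt_nonneg _)
  unfold G
  have h2 : 1 / Real.sqrt (2 * Real.pi) ≤ 1 / Real.sqrt (2 * Real.pi) / Real.sqrt t := by
    rw [div_div]
    apply div_le_div_of_nonneg_left one_pos.le _ _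
    · positivity
    · calc Real.sqrt (2 * Real.pi) * Real.sqrt t ≤ Real.sqrt (2 * Real.pi) * 1 := by
            exact mul_le_mul_of_nonneg_left hs1 (Real.sqrt_nonneg _)
        _ = Real.sqrt (2 * Real.pi) := mul_one _
  rw [add_div]
  apply add_le_add h2
  rw [mul_div_assoc]
  exact h1

lemma summable_nat_exp {t : ℝ} (ht : 0 < t) :
    Summable (fun n : ℕ => Real.exp (-t * (n : ℝ) ^ 2)) := by
  refine Summable.of_nonneg_of_le (fun _ => (Real.exp_pos _).le) (fun n => ?_)
    (summable_geometric_of_lt_one (Real.exp_pos (-t)).le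
      (Real.exp_lt_one_iff.mpr (by linarith)))
  rw [← Real.exp_nat_mul]
  apply Real.exp_le_exp.mpr
  have h : (n:ℝ) ≤ (n:ℝ) ^ 2 := by exact_mod_cast Nat.le_self_pow two_ne_zero n
  have := mul_le_mul_of_nonneg_left h ht.le
  nlinarith

lemma summable_int_exp {t : ℝ} (ht : 0 < t) :
    Summable (fun n : ℤ => Real.exp (-t * (n : ℝ) ^ 2)) := by
  refine Summable.of_nat_of_neg_add_one (summable_nat_exp ht) ?_
  have he : (fun n : ℕ => Real.exp (-t * ((-((n : ℤ) + 1) : ℤ) : ℝ) ^ 2)) =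
      fun n : ℕ => Real.exp (-((n : ℝ) + 1) ^ 2 * t) := by
    funext n; congr 1; push_cast; ring
  rw [he]
  exact summable_exp_aux ht

lemma key_nonneg {t : ℝ} (ht : 0 < t) (x : ℝ) :
    0 ≤ ∑' n : ℤ, Real.exp (-t * (n : ℝ) ^ 2) * Real.cos (x * (n : ℝ)) := by
  have hπ : (0:ℝ) < Real.pi := Real.pi_pos
  set a : ℂ := ((t / Real.pi : ℝ) : ℂ) with ha_def
  have ha : 0 < a.re := by simp [ha_def, Complex.ofReal_re]; positivity
  set b : ℂ := Complex.I * ((x / (2 * Real.pi) : ℝ) : ℂ) with hb_def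
  have key := Complex.tsum_exp_neg_quadratic ha b
  -- identify LHS terms
  have hlhs : ∀ n : ℤ, -(Real.pi : ℂ) * a * (n : ℂ) ^ 2 + 2 * (Real.pi : ℂ) * b * (n : ℂ) =
      ((-t * (n : ℝ) ^ 2 : ℝ) : ℂ) + ((x * (n : ℝ) : ℝ) : ℂ) * Complex.I := by
    intro n
    rw [ha_def, hb_def]
    have hπ' : (Real.pi : ℂ) ≠ 0 := by exact_mod_cast hπ.ne'
    push_cast
    field_simp
  -- summability of LHS
  have hsum : Summable (fun n : ℤ => Complex.exp
      (-(Real.pi : ℂ) * a * (n : ℂ) ^ 2 + 2 * (Real.pi : ℂ) * b * (n : ℂ))) := by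
    apply Summable.of_norm
    have : (fun n : ℤ => ‖Complex.exp
        (-(Real.pi : ℂ) * a * (n : ℂ) ^ 2 + 2 * (Real.pi : ℂ) * b * (n : ℂ))‖) =
        fun n : ℤ => Real.exp (-t * (n : ℝ) ^ 2) := by
      funext n
      rw [hlhs n, Complex.norm_exp]
      congr 1
      simp [Complex.add_re, Complex.ofReal_re, Complex.mul_re, Complex.ofReal_im,
        Complex.I_re, Complex.I_im]
      left; norm_cast
    rw [this]
    exact summable_int_exp ht
  -- RHS is a nonnegative real
  have hrhs : 0 ≤ (1 / a ^ (1 / 2 : ℂ) *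
      ∑' n : ℤ, Complex.exp (-(Real.pi : ℂ) / a * ((n : ℂ) + Complex.I * b) ^ 2)).re := by
    have hterm : ∀ n : ℤ, Complex.exp (-(Real.pi : ℂ) / a * ((n : ℂ) + Complex.I * b) ^ 2) =
        ((Real.exp (-(Real.pi ^ 2 / t) * ((n : ℝ) - x / (2 * Real.pi)) ^ 2) : ℝ) : ℂ) := by
      intro n
      rw [Complex.ofReal_exp]
      congr 1
      rw [ha_def, hb_def]
      have hI : Complex.I * (Complex.I * ((x / (2 * Real.pi) : ℝ) : ℂ)) =
          -(((x / (2 * Real.pi) : ℝ) : ℂ)) := by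
        rw [← mul_assoc, Complex.I_mul_I, neg_one_mul]
      rw [hI]
      push_cast
      have hπ' : (Real.pi : ℂ) ≠ 0 := by exact_mod_cast hπ.ne'
      have ht' : (t : ℂ) ≠ 0 := by exact_mod_cast ht.ne'
      field_simp
      ring
    have hca : a ^ (1 / 2 : ℂ) = (((t / Real.pi) ^ (1 / 2 : ℝ) : ℝ) : ℂ) := by
      rw [ha_def, Complex.ofReal_cpow (by positivity)]
      norm_num
    have : (1 / a ^ (1 / 2 : ℂ) *
        ∑' n : ℤ, Complex.exp (-(Real.pi : ℂ) / a * ((n : ℂ) + Complex.I * b) ^ 2)) =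
        (((1 / (t / Real.pi) ^ (1 / 2 : ℝ)) *
          ∑' n : ℤ, Real.exp (-(Real.pi ^ 2 / t) * ((n : ℝ) - x / (2 * Real.pi)) ^ 2) : ℝ) : ℂ) := by
      rw [hca]
      simp_rw [hterm]
      rw [← Complex.ofReal_tsum]
      push_cast
      ring
    rw [this, Complex.ofReal_re]
    have hts : 0 ≤ ∑' n : ℤ, Real.exp (-(Real.pi ^ 2 / t) * ((n : ℝ) - x / (2 * Real.pi)) ^ 2) :=
      tsum_nonneg (fun n => (Real.exp_pos _).le)
    positivity
  -- take real parts
  simp_rw [hlhs] at key hsum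
  have hre := congrArg Complex.re key
  rw [Complex.re_tsum hsum] at hre
  have hterm_re : ∀ n : ℤ, (Complex.exp (((-t * (n : ℝ) ^ 2 : ℝ) : ℂ) +
      ((x * (n : ℝ) : ℝ) : ℂ) * Complex.I)).re =
      Real.exp (-t * (n : ℝ) ^ 2) * Real.cos (x * (n : ℝ)) := by
    intro n
    rw [Complex.exp_re]
    congr 2 <;>
      simp [Complex.add_re, Complex.ofReal_re, Complex.mul_re, Complex.ofReal_im,
        Complex.I_re, Complex.I_im, Complex.add_im, Complex.mul_im]
    · left; norm_cast
    · right; norm_cast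
  simp_rw [hterm_re] at hre
  rw [hre]
  exact hrhs

lemma G_nonneg {t : ℝ} (ht : 0 < t) (x : ℝ) : 0 ≤ G t x := by
  have hπ : (0:ℝ) < Real.pi := Real.pi_pos
  set f : ℤ → ℝ := fun n => Real.exp (-t * (n : ℝ) ^ 2) * Real.cos (x * (n : ℝ)) with hf
  set S := ∑' k : ℕ, Real.exp (-((k : ℝ) + 1) ^ 2 * t) * Real.cos (((k : ℝ) + 1) * x) with hSdef
  have hS_sum : Summable (fun k : ℕ =>
      Real.exp (-((k : ℝ) + 1) ^ 2 * t) * Real.cos (((k : ℝ) + 1) * x)) := by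
    apply Summable.of_norm_bounded (summable_exp_aux ht)
    intro k
    rw [Real.norm_eq_abs, abs_mul, abs_of_nonneg (Real.exp_pos _).le]
    have := abs_cos_le_one (((k : ℝ) + 1) * x)
    nlinarith [(Real.exp_pos (-((k : ℝ) + 1) ^ 2 * t)).le]
  have h1 : Summable (fun n : ℕ => f (n : ℤ)) := by
    apply Summable.of_norm_bounded (summable_nat_exp ht)
    intro n
    rw [hf, Real.norm_eq_abs, abs_mul, abs_of_nonneg (Real.exp_pos _).le]
    have h := abs_cos_le_one (x * ((n : ℤ) : ℝ))
    push_cast at h ⊢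
    nlinarith [(Real.exp_pos (-t * (n : ℝ) ^ 2)).le]
  have h2eq : (fun n : ℕ => f (-((n : ℤ) + 1))) = fun n : ℕ =>
      Real.exp (-((n : ℝ) + 1) ^ 2 * t) * Real.cos (((n : ℝ) + 1) * x) := by
    funext n
    rw [hf]
    push_cast
    rw [show x * -((n : ℝ) + 1) = -(((n : ℝ) + 1) * x) by ring, Real.cos_neg]
    congr 2
    ring
  have h2 : Summable (fun n : ℕ => f (-((n : ℤ) + 1))) := by rw [h2eq]; exact hS_sum
  have hsplit : (∑' n : ℤ, f n) = (∑' n : ℕ, f (n : ℤ)) + ∑' n : ℕ, f (-((n : ℤ) + 1)) :=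
    tsum_of_nat_of_neg_add_one h1 h2
  have hnat : (∑' n : ℕ, f (n : ℤ)) = 1 + S := by
    rw [Summable.tsum_eq_zero_add h1]
    congr 1
    · simp [hf]
    · rw [hSdef]
      congr 1
      funext n
      rw [hf]
      push_cast
      rw [show x * ((n : ℝ) + 1) = ((n : ℝ) + 1) * x by ring]
      congr 2
      ring
  have hneg : (∑' n : ℕ, f (-((n : ℤ) + 1))) = S := by rw [h2eq, hSdef]
  have hkey := key_nonneg ht x
  rw [← hf] at hkey
  rw [hsplit, hnat, hneg] at hkey
  -- hkey : 0 ≤ 1 + S + S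
  have hprod : Real.sqrt (2 / Real.pi) * Real.sqrt (2 * Real.pi) = 2 := by
    rw [← Real.sqrt_mul (by positivity)]
    rw [show 2 / Real.pi * (2 * Real.pi) = 4 by field_simp; ring]
    rw [show (4:ℝ) = 2 ^ 2 by norm_num, Real.sqrt_sq (by norm_num)]
  have h2π : 0 < Real.sqrt (2 * Real.pi) := Real.sqrt_pos.mpr (by positivity)
  have hG : G t x = 1 / Real.sqrt (2 * Real.pi) + Real.sqrt (2 / Real.pi) * S := by
    rw [G, hSdef]
    congr 1
    simp_rw [mul_assoc]
    exact tsum_mul_left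
  rw [hG]
  have heq : 1 / Real.sqrt (2 * Real.pi) + Real.sqrt (2 / Real.pi) * S =
      (1 + 2 * S) / Real.sqrt (2 * Real.pi) := by
    have h3 : Real.sqrt (2 / Real.pi) = 2 / Real.sqrt (2 * Real.pi) := by
      rw [eq_div_iff h2π.ne']; exact hprod
    rw [h3]
    field_simp
  rw [heq]
  apply div_nonneg _ h2π.le
  linarith

lemma integral_G {t : ℝ} (ht : 0 < t) :
    (∫ y in (-Real.pi)..Real.pi, G t y) = Real.sqrt (2 * Real.pi) := by
  have hπ : (0:ℝ) < Real.pi := Real.pi_pos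
  have hle : -Real.pi ≤ Real.pi := by linarith
  set F : ℕ → ℝ → ℝ := fun k y => Real.sqrt (2 / Real.pi) *
      Real.exp (-((k : ℝ) + 1) ^ 2 * t) * Real.cos (((k : ℝ) + 1) * y) with hF
  have hFc : ∀ k, Continuous (F k) := fun k => by rw [hF]; fun_prop
  have hTc : Continuous (fun y => ∑' k, F k y) :=
    continuous_tsum hFc ((summable_exp_aux ht).mul_left _) (fun k y => term_abs_le k y)
  have hsplit : (∫ y in (-Real.pi)..Real.pi, G t y) =
      (∫ y in (-Real.pi)..Real.pi, 1 / Real.sqrt (2 * Real.pi)) +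
      ∫ y in (-Real.pi)..Real.pi, ∑' k, F k y := by
    rw [← intervalIntegral.integral_add intervalIntegrable_const
      (hTc.intervalIntegrable _ _)]
    rfl
  have hconst : (∫ y in (-Real.pi)..Real.pi, 1 / Real.sqrt (2 * Real.pi)) =
      Real.sqrt (2 * Real.pi) := by
    rw [intervalIntegral.integral_const, smul_eq_mul]
    have hsq : Real.sqrt (2 * Real.pi) ^ 2 = 2 * Real.pi := Real.sq_sqrt (by positivity)
    have h2π : 0 < Real.sqrt (2 * Real.pi) := Real.sqrt_pos.mpr (by positivity)
    rw [show Real.pi - -Real.pi = 2 * Real.pi by ring, mul_one_div, div_eq_iff h2π.ne']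
    nlinarith [hsq]
  have hFint : ∀ k, IntegrableOn (F k) (Set.Ioc (-Real.pi) Real.pi) volume :=
    fun k => ((hFc k).intervalIntegrable (-Real.pi) Real.pi).1
  have hvol : (volume (Set.Ioc (-Real.pi) Real.pi)).toReal = 2 * Real.pi := by
    rw [Real.volume_Ioc, ENNReal.toReal_ofReal (by linarith)]
    ring
  have hbound : ∀ k, (∫ y in Set.Ioc (-Real.pi) Real.pi, ‖F k y‖) ≤
      2 * Real.pi * (Real.sqrt (2 / Real.pi) * Real.exp (-((k : ℝ) + 1) ^ 2 * t)) := by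
    intro k
    calc (∫ y in Set.Ioc (-Real.pi) Real.pi, ‖F k y‖)
        ≤ ∫ _ in Set.Ioc (-Real.pi) Real.pi,
          Real.sqrt (2 / Real.pi) * Real.exp (-((k : ℝ) + 1) ^ 2 * t) := by
          apply setIntegral_mono_on (hFint k).norm ((integrableOn_const_iff).mpr
            (Or.inr (by rw [Real.volume_Ioc]; exact ENNReal.ofReal_lt_top)))
            measurableSet_Ioc
          intro y _
          exact term_abs_le k y
      _ = 2 * Real.pi * (Real.sqrt (2 / Real.pi) * Real.exp (-((k : ℝ) + 1) ^ 2 * t)) := by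
          rw [setIntegral_const, smul_eq_mul, measureReal_def, hvol]
  have hsummable : Summable (fun k => ∫ y in Set.Ioc (-Real.pi) Real.pi, ‖F k y‖) := by
    apply Summable.of_nonneg_of_le
      (fun k => integral_nonneg (fun y => norm_nonneg _)) hbound
    exact (((summable_exp_aux ht).mul_left _).mul_left _)
  have hswap : (∫ y in Set.Ioc (-Real.pi) Real.pi, ∑' k, F k y) =
      ∑' k, ∫ y in Set.Ioc (-Real.pi) Real.pi, F k y :=
    (integral_tsum_of_summable_integral_norm hFint hsummable).symm
  have hcos : ∀ k : ℕ, (∫ y in (-Real.pi)..Real.pi, Real.cos (((k : ℝ) + 1) * y)) = 0 := by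
    intro k
    have hc : ((k : ℝ) + 1) ≠ 0 := by positivity
    rw [intervalIntegral.integral_comp_mul_left (fun y => Real.cos y) hc, integral_cos]
    have hs : Real.sin (((k : ℝ) + 1) * Real.pi) = 0 := by
      have := Real.sin_nat_mul_pi (k + 1)
      push_cast at this
      exact this
    rw [show ((k : ℝ) + 1) * -Real.pi = -(((k : ℝ) + 1) * Real.pi) by ring, Real.sin_neg, hs]
    simp
  have hFzero : ∀ k, (∫ y in Set.Ioc (-Real.pi) Real.pi, F k y) = 0 := by
    intro k
    have : (∫ y in (-Real.pi)..Real.pi, F k y) = 0 := by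
      rw [hF]
      simp only
      rw [intervalIntegral.integral_const_mul, hcos k, mul_zero]
    rwa [intervalIntegral.integral_of_le hle] at this
  have hT : (∫ y in (-Real.pi)..Real.pi, ∑' k, F k y) = 0 := by
    rw [intervalIntegral.integral_of_le hle, hswap]
    simp [hFzero]
  rw [hsplit, hconst, hT, add_zero]

/-- `L^{p/(p-1)}` estimate on the periodic heat kernel. -/
theorem stmt_7 (p : ℝ) (hp : 1 < p) :
    ∃ C > (0 : ℝ), ∀ t ∈ Set.Ioc (0 : ℝ) 1,
      (∫ y in (-Real.pi)..Real.pi, |G t y| ^ (p / (p - 1))) ≤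
        C * t ^ (-(1 / (2 * (p - 1)))) := by
  have hπ : (0:ℝ) < Real.pi := Real.pi_pos
  have hle : -Real.pi ≤ Real.pi := by linarith
  have hp1 : 0 < p - 1 := by linarith
  set e : ℝ := 1 / (p - 1) with he_def
  have he : 0 < e := by positivity
  have hqe : p / (p - 1) = e + 1 := by rw [he_def]; field_simp; ring
  set M : ℝ := 1 / Real.sqrt (2 * Real.pi) + Real.sqrt (2 / Real.pi) * Real.exp 4⁻¹ with hM_def
  have hM : 0 < M := by positivity
  refine ⟨Real.sqrt (2 * Real.pi) * M ^ e, by positivity, ?_⟩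
  rintro t ⟨ht, ht1⟩
  have hst : 0 < Real.sqrt t := Real.sqrt_pos.mpr ht
  set b : ℝ := M / Real.sqrt t with hb_def
  have hb : 0 < b := by positivity
  -- pointwise bound
  have hpoint : ∀ y ∈ Set.Icc (-Real.pi) Real.pi,
      |G t y| ^ (p / (p - 1)) ≤ b ^ e * G t y := by
    intro y _
    rw [hqe, abs_of_nonneg (G_nonneg ht y)]
    rcases eq_or_lt_of_le (G_nonneg ht y) with h0 | h0
    · rw [← h0, Real.zero_rpow (by positivity), mul_zero]
    · rw [Real.rpow_add_one h0.ne']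
      apply mul_le_mul_of_nonneg_right _ h0.le
      exact Real.rpow_le_rpow h0.le (G_le ht ht1 y) he.le
  -- integral bound
  have hint : (∫ y in (-Real.pi)..Real.pi, |G t y| ^ (p / (p - 1))) ≤
      ∫ y in (-Real.pi)..Real.pi, b ^ e * G t y := by
    apply intervalIntegral.integral_mono_on hle _ _ hpoint
    · exact (((continuous_G ht).abs).rpow_const
        (fun y => Or.inr (by positivity))).intervalIntegrable _ _
    · exact (continuous_const.mul (continuous_G ht)).intervalIntegrable _ _
  have hval : (∫ y in (-Real.pi)..Real.pi, b ^ e * G t y) =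
      b ^ e * Real.sqrt (2 * Real.pi) := by
    rw [intervalIntegral.integral_const_mul, integral_G ht]
  have hexp : e / 2 = 1 / (2 * (p - 1)) := by rw [he_def]; field_simp
  have hbe : b ^ e = M ^ e * t ^ (-(1 / (2 * (p - 1)))) := by
    rw [hb_def, Real.div_rpow hM.le hst.le, ← hexp]
    rw [show Real.sqrt t ^ e = t ^ (e / 2) from by
      rw [Real.sqrt_eq_rpow, ← Real.rpow_mul ht.le]; ring_nf]
    rw [Real.rpow_neg ht.le, div_eq_mul_inv]
  calc (∫ y in (-Real.pi)..Real.pi, |G t y| ^ (p / (p - 1)))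
      ≤ ∫ y in (-Real.pi)..Real.pi, b ^ e * G t y := hint
    _ = b ^ e * Real.sqrt (2 * Real.pi) := hval
    _ = Real.sqrt (2 * Real.pi) * M ^ e * t ^ (-(1 / (2 * (p - 1)))) := by
        rw [hbe]; ring
end

section
/- Let φ : ℝ → ℝ be a continuous 2π-periodic function. Then (2π)^{-1/2} ∫_{-π}^{π} G(t, x - y) φ(y) dy converges to φ(x), uniformly in x ∈ ℝ, as t → 0⁺. -/
open Real MeasureTheory

namespace Stmt11

open Filter intervalIntegral

lemma neg_pi_le_pi : -π ≤ π := by linarith [Real.pi_pos]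

lemma summable_exp_aux {t : ℝ} (ht : 0 < t) :
    Summable fun k : ℕ => Real.exp (-((k : ℝ) + 1) ^ 2 * t) := by
  refine Summable.of_nonneg_of_le (fun k => (Real.exp_pos _).le) (fun k => ?_)
    (summable_geometric_of_lt_one (Real.exp_pos (-t)).le (Real.exp_lt_one_iff.mpr (by linarith)))
  rw [← Real.exp_nat_mul]
  apply Real.exp_le_exp.mpr
  have hk : (0:ℝ) ≤ (k:ℝ) := Nat.cast_nonneg k
  nlinarith [mul_nonneg (mul_nonneg hk hk) ht.le, mul_nonneg hk ht.le]

lemma summable_coeff {t : ℝ} (ht : 0 < t) :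
    Summable fun k : ℕ => Real.sqrt (2 / π) * Real.exp (-((k : ℝ) + 1) ^ 2 * t) :=
  (summable_exp_aux ht).mul_left _

lemma continuous_G {t : ℝ} (ht : 0 < t) : Continuous (G t) := by
  unfold G
  refine Continuous.add continuous_const ?_
  refine continuous_tsum (fun k => ?_) (summable_coeff ht) (fun k x => ?_)
  · exact continuous_const.mul (Real.continuous_cos.comp (continuous_const.mul continuous_id))
  · rw [Real.norm_eq_abs, abs_mul]
    have h1 : 0 ≤ Real.sqrt (2 / π) * Real.exp (-((k : ℝ) + 1) ^ 2 * t) := by positivity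
    calc |Real.sqrt (2 / π) * Real.exp (-((k : ℝ) + 1) ^ 2 * t)| * |Real.cos (((k : ℝ) + 1) * x)|
        ≤ |Real.sqrt (2 / π) * Real.exp (-((k : ℝ) + 1) ^ 2 * t)| * 1 :=
          mul_le_mul_of_nonneg_left (Real.abs_cos_le_one _) (abs_nonneg _)
      _ = Real.sqrt (2 / π) * Real.exp (-((k : ℝ) + 1) ^ 2 * t) := by
          rw [mul_one, abs_of_nonneg h1]

lemma integral_G_mul {t : ℝ} (ht : 0 < t) (x : ℝ) {ψ : ℝ → ℝ} (hψ : Continuous ψ) :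
    ∫ y in (-π)..π, G t (x - y) * ψ y
      = (∫ y in (-π)..π, 1 / Real.sqrt (2 * π) * ψ y)
        + ∑' k : ℕ, (Real.sqrt (2 / π) * Real.exp (-((k : ℝ) + 1) ^ 2 * t)) *
            ∫ y in (-π)..π, Real.cos (((k : ℝ) + 1) * (x - y)) * ψ y := by
  set F : ℕ → ℝ → ℝ := fun k y =>
    (Real.sqrt (2 / π) * Real.exp (-((k : ℝ) + 1) ^ 2 * t)) *
      (Real.cos (((k : ℝ) + 1) * (x - y)) * ψ y) with hF
  have hFc : ∀ k, Continuous (F k) := fun k => by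
    exact continuous_const.mul ((Real.continuous_cos.comp (continuous_const.mul
      (continuous_const.sub continuous_id))).mul hψ)
  have hpt : ∀ y : ℝ, G t (x - y) * ψ y = 1 / Real.sqrt (2 * π) * ψ y + ∑' k, F k y := by
    intro y
    unfold G
    rw [add_mul, ← tsum_mul_right]
    congr 1
    refine tsum_congr fun k => ?_
    simp only [hF]
    ring
  have htail : Continuous fun y => ∑' k, F k y := by
    have : (fun y => ∑' k, F k y)
        = fun y => G t (x - y) * ψ y - 1 / Real.sqrt (2 * π) * ψ y := by
      funext y; rw [hpt y]; ring
    rw [this]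
    exact (((continuous_G ht).comp (continuous_const.sub continuous_id)).mul hψ).sub
      (continuous_const.mul hψ)
  obtain ⟨M, hM⟩ := (isCompact_Icc (a := -π) (b := π)).exists_bound_of_continuousOn
    hψ.continuousOn
  have hM0 : 0 ≤ M := le_trans (norm_nonneg _) (hM 0 ⟨by linarith [Real.pi_pos], Real.pi_pos.le⟩)
  have hFk_int : ∀ k, Integrable (F k) (volume.restrict (Set.Ioc (-π) π)) := fun k =>
    (hFc k).integrableOn_Ioc
  have hsum : Summable fun k => ∫ y, ‖F k y‖ ∂(volume.restrict (Set.Ioc (-π) π)) := by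
    refine Summable.of_nonneg_of_le (fun k => integral_nonneg fun y => norm_nonneg _)
      (fun k => ?_) (((summable_coeff ht).mul_right M).mul_right (2 * π))
    have hb : ∀ y ∈ Set.Ioc (-π) π,
        ‖‖F k y‖‖ ≤ Real.sqrt (2 / π) * Real.exp (-((k : ℝ) + 1) ^ 2 * t) * M := by
      intro y hy
      rw [norm_norm, hF]
      simp only [Real.norm_eq_abs, abs_mul]
      have h1 : 0 ≤ Real.sqrt (2 / π) * Real.exp (-((k : ℝ) + 1) ^ 2 * t) := by positivity
      rw [abs_of_nonneg (Real.sqrt_nonneg _), abs_of_nonneg (Real.exp_pos _).le]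
      have h2 : |Real.cos (((k : ℝ) + 1) * (x - y))| ≤ 1 := Real.abs_cos_le_one _
      have h3 : |ψ y| ≤ M := hM y ⟨hy.1.le, hy.2⟩
      have h4 : |Real.cos (((k : ℝ) + 1) * (x - y))| * |ψ y| ≤ 1 * M :=
        mul_le_mul h2 h3 (abs_nonneg _) zero_le_one
      rw [one_mul] at h4
      exact mul_le_mul_of_nonneg_left h4 h1
    have hnorm := norm_setIntegral_le_of_norm_le_const (μ := volume) (s := Set.Ioc (-π) π)
      (f := fun y => ‖F k y‖) (by rw [Real.volume_Ioc]; exact ENNReal.ofReal_lt_top) hb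
    rw [Real.norm_of_nonneg (integral_nonneg fun y => norm_nonneg _)] at hnorm
    have hvol : volume.real (Set.Ioc (-π : ℝ) π) = 2 * π := by
      rw [Real.volume_real_Ioc_of_le neg_pi_le_pi]
      ring
    rw [hvol] at hnorm
    exact hnorm
  have key := MeasureTheory.integral_tsum_of_summable_integral_norm hFk_int hsum
  calc ∫ y in (-π)..π, G t (x - y) * ψ y
      = ∫ y in (-π)..π, (1 / Real.sqrt (2 * π) * ψ y + ∑' k, F k y) :=
        intervalIntegral.integral_congr fun y _ => hpt y
    _ = (∫ y in (-π)..π, 1 / Real.sqrt (2 * π) * ψ y) + ∫ y in (-π)..π, ∑' k, F k y :=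
        intervalIntegral.integral_add ((continuous_const.mul hψ).intervalIntegrable _ _)
          (htail.intervalIntegrable _ _)
    _ = (∫ y in (-π)..π, 1 / Real.sqrt (2 * π) * ψ y)
        + ∑' k : ℕ, (Real.sqrt (2 / π) * Real.exp (-((k : ℝ) + 1) ^ 2 * t)) *
            ∫ y in (-π)..π, Real.cos (((k : ℝ) + 1) * (x - y)) * ψ y := by
        congr 1
        rw [intervalIntegral.integral_of_le neg_pi_le_pi, ← key]
        refine tsum_congr fun k => ?_
        rw [intervalIntegral.integral_of_le neg_pi_le_pi]
        exact MeasureTheory.integral_const_mul _ _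

lemma neg_one_zpow_neg (m : ℤ) : ((-1 : ℝ)) ^ (-m) = (-1 : ℝ) ^ m := by
  have h : ((-1 : ℝ) ^ m) * ((-1 : ℝ) ^ m) = 1 := by
    rw [← mul_zpow]; norm_num
  rw [zpow_neg, inv_eq_of_mul_eq_one_right h]

lemma int_cos_c (c : ℝ) {m : ℤ} (hm : m ≠ 0) :
    ∫ y in (-π)..π, Real.cos (c + (m : ℝ) * y) = 0 := by
  have hm' : (m : ℝ) ≠ 0 := Int.cast_ne_zero.mpr hm
  have h : ∀ y ∈ Set.uIcc (-π) π, Real.cos (c + (m : ℝ) * y) = Real.cos ((m : ℝ) * y + c) :=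
    fun y _ => by ring_nf
  rw [intervalIntegral.integral_congr h,
    intervalIntegral.integral_comp_mul_add Real.cos hm' c, integral_cos,
    show (m : ℝ) * π + c = c + (m : ℤ) * π by push_cast; ring,
    show (m : ℝ) * (-π) + c = c + ((-m : ℤ) : ℝ) * π by push_cast; ring,
    Real.sin_add_int_mul_pi, Real.sin_add_int_mul_pi, neg_one_zpow_neg]
  simp

lemma int_sin_c (c : ℝ) {m : ℤ} (hm : m ≠ 0) :
    ∫ y in (-π)..π, Real.sin (c + (m : ℝ) * y) = 0 := by
  have hm' : (m : ℝ) ≠ 0 := Int.cast_ne_zero.mpr hm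
  have h : ∀ y ∈ Set.uIcc (-π) π, Real.sin (c + (m : ℝ) * y) = Real.sin ((m : ℝ) * y + c) :=
    fun y _ => by ring_nf
  rw [intervalIntegral.integral_congr h,
    intervalIntegral.integral_comp_mul_add Real.sin hm' c, integral_sin,
    show (m : ℝ) * π + c = c + (m : ℤ) * π by push_cast; ring,
    show (m : ℝ) * (-π) + c = c + ((-m : ℤ) : ℝ) * π by push_cast; ring,
    Real.cos_add_int_mul_pi, Real.cos_add_int_mul_pi, neg_one_zpow_neg]
  simp

lemma int_const_c (c : ℝ) : ∫ y in (-π)..π, Real.cos (c + ((0 : ℤ) : ℝ) * y) = 2 * π * Real.cos c := by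
  simp only [Int.cast_zero, zero_mul, add_zero]
  rw [intervalIntegral.integral_const, smul_eq_mul]
  ring

lemma int_const_s (c : ℝ) : ∫ y in (-π)..π, Real.sin (c + ((0 : ℤ) : ℝ) * y) = 2 * π * Real.sin c := by
  simp only [Int.cast_zero, zero_mul, add_zero]
  rw [intervalIntegral.integral_const, smul_eq_mul]
  ring

lemma int_cos_cos (x : ℝ) {M : ℤ} (hM : 0 < M) (n : ℤ) :
    ∫ y in (-π)..π, Real.cos ((M : ℝ) * (x - y)) * Real.cos ((n : ℝ) * y)
      = if n = M ∨ n = -M then π * Real.cos ((n : ℝ) * x) else 0 := by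
  have hpt : ∀ y ∈ Set.uIcc (-π) π,
      Real.cos ((M : ℝ) * (x - y)) * Real.cos ((n : ℝ) * y)
        = (1 / 2) * Real.cos ((M : ℝ) * x + ((n - M : ℤ) : ℝ) * y)
          + (1 / 2) * Real.cos ((M : ℝ) * x + ((-(M + n) : ℤ) : ℝ) * y) := by
    intro y _
    have h1 : (M : ℝ) * x + ((n - M : ℤ) : ℝ) * y = (M : ℝ) * (x - y) + (n : ℝ) * y := by
      push_cast; ring
    have h2 : (M : ℝ) * x + ((-(M + n) : ℤ) : ℝ) * y = (M : ℝ) * (x - y) - (n : ℝ) * y := by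
      push_cast; ring
    rw [h1, h2, Real.cos_add, Real.cos_sub]
    ring
  rw [intervalIntegral.integral_congr hpt,
    intervalIntegral.integral_add
      (Continuous.intervalIntegrable (by fun_prop) _ _)
      (Continuous.intervalIntegrable (by fun_prop) _ _),
    intervalIntegral.integral_const_mul, intervalIntegral.integral_const_mul]
  by_cases h1 : n = M
  · subst h1
    rw [if_pos (Or.inl rfl), show n - n = (0 : ℤ) by ring, int_const_c,
      int_cos_c _ (show -(n + n) ≠ 0 by omega)]
    ring
  · by_cases h2 : n = -M
    · subst h2
      rw [if_pos (Or.inr rfl), show (-(M + -M) : ℤ) = 0 by ring, int_const_c,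
        int_cos_c _ (show (-M - M : ℤ) ≠ 0 by omega)]
      have : Real.cos (((-M : ℤ) : ℝ) * x) = Real.cos ((M : ℝ) * x) := by
        push_cast; rw [show -(M : ℝ) * x = -((M : ℝ) * x) by ring, Real.cos_neg]
      rw [this]
      ring
    · rw [if_neg (by tauto), int_cos_c _ (show n - M ≠ 0 by omega),
        int_cos_c _ (show -(M + n) ≠ 0 by omega)]
      ring

lemma int_cos_sin (x : ℝ) {M : ℤ} (hM : 0 < M) (n : ℤ) :
    ∫ y in (-π)..π, Real.cos ((M : ℝ) * (x - y)) * Real.sin ((n : ℝ) * y)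
      = if n = M ∨ n = -M then π * Real.sin ((n : ℝ) * x) else 0 := by
  have hpt : ∀ y ∈ Set.uIcc (-π) π,
      Real.cos ((M : ℝ) * (x - y)) * Real.sin ((n : ℝ) * y)
        = (1 / 2) * Real.sin ((M : ℝ) * x + ((n - M : ℤ) : ℝ) * y)
          - (1 / 2) * Real.sin ((M : ℝ) * x + ((-(M + n) : ℤ) : ℝ) * y) := by
    intro y _
    have h1 : (M : ℝ) * x + ((n - M : ℤ) : ℝ) * y = (M : ℝ) * (x - y) + (n : ℝ) * y := by
      push_cast; ring
    have h2 : (M : ℝ) * x + ((-(M + n) : ℤ) : ℝ) * y = (M : ℝ) * (x - y) - (n : ℝ) * y := by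
      push_cast; ring
    rw [h1, h2, Real.sin_add, Real.sin_sub]
    ring
  rw [intervalIntegral.integral_congr hpt,
    intervalIntegral.integral_sub
      (Continuous.intervalIntegrable (by fun_prop) _ _)
      (Continuous.intervalIntegrable (by fun_prop) _ _),
    intervalIntegral.integral_const_mul, intervalIntegral.integral_const_mul]
  by_cases h1 : n = M
  · subst h1
    rw [if_pos (Or.inl rfl), show n - n = (0 : ℤ) by ring, int_const_s,
      int_sin_c _ (show -(n + n) ≠ 0 by omega)]
    ring
  · by_cases h2 : n = -M
    · subst h2
      rw [if_pos (Or.inr rfl), show (-(M + -M) : ℤ) = 0 by ring, int_const_s,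
        int_sin_c _ (show (-M - M : ℤ) ≠ 0 by omega)]
      have : Real.sin (((-M : ℤ) : ℝ) * x) = -Real.sin ((M : ℝ) * x) := by
        push_cast; rw [show -(M : ℝ) * x = -((M : ℝ) * x) by ring, Real.sin_neg]
      rw [this]
      ring
    · rw [if_neg (by tauto), int_sin_c _ (show n - M ≠ 0 by omega),
        int_sin_c _ (show -(M + n) ≠ 0 by omega)]
      ring

lemma sqrt_two_div_pi_mul_pi : Real.sqrt (2 / π) * π = Real.sqrt (2 * π) := by
  have hπ : (0 : ℝ) < π := Real.pi_pos
  rw [show π = Real.sqrt (π ^ 2) by rw [Real.sqrt_sq hπ.le],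
    ← Real.sqrt_mul (by positivity)]
  congr 1
  rw [Real.sqrt_sq hπ.le]
  field_simp

lemma two_pi_div_sqrt : 2 * π * (1 / Real.sqrt (2 * π)) = Real.sqrt (2 * π) := by
  have h : Real.sqrt (2 * π) * Real.sqrt (2 * π) = 2 * π :=
    Real.mul_self_sqrt (by positivity)
  rw [mul_one_div, Real.div_sqrt]

lemma integral_G_cos {t : ℝ} (ht : 0 < t) (x : ℝ) (n : ℤ) :
    ∫ y in (-π)..π, G t (x - y) * Real.cos ((n : ℝ) * y)
      = Real.sqrt (2 * π) * (Real.exp (-(n : ℝ) ^ 2 * t) * Real.cos ((n : ℝ) * x)) := by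
  rw [integral_G_mul ht x (ψ := fun y => Real.cos ((n : ℝ) * y)) (by fun_prop)]
  have hcast : ∀ k : ℕ, ((k : ℝ) + 1) = (((k + 1 : ℕ) : ℤ) : ℝ) := fun k => by push_cast; ring
  rcases eq_or_ne n 0 with h0 | h0
  · subst h0
    have e1 : (∫ y in (-π)..π, 1 / Real.sqrt (2 * π) * Real.cos (((0:ℤ) : ℝ) * y))
        = Real.sqrt (2 * π) := by
      simp only [Int.cast_zero, zero_mul, Real.cos_zero, mul_one]
      rw [intervalIntegral.integral_const, smul_eq_mul]
      rw [show π - -π = 2 * π by ring]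
      exact two_pi_div_sqrt
    rw [e1]
    have e2 : ∀ k : ℕ, (Real.sqrt (2 / π) * Real.exp (-((k : ℝ) + 1) ^ 2 * t)) *
        ∫ y in (-π)..π, Real.cos (((k : ℝ) + 1) * (x - y)) * Real.cos (((0:ℤ) : ℝ) * y) = 0 := by
      intro k
      rw [hcast k, int_cos_cos x (by exact_mod_cast Nat.succ_pos k) 0,
        if_neg (by omega)]
      ring
    rw [tsum_congr e2, tsum_zero]
    simp
  · have e1 : (∫ y in (-π)..π, 1 / Real.sqrt (2 * π) * Real.cos ((n : ℝ) * y)) = 0 := by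
      rw [intervalIntegral.integral_const_mul]
      have : ∀ y ∈ Set.uIcc (-π) π, Real.cos ((n : ℝ) * y) = Real.cos (0 + (n : ℝ) * y) :=
        fun y _ => by rw [zero_add]
      rw [intervalIntegral.integral_congr this, int_cos_c 0 h0]
      ring
    rw [e1, zero_add]
    set k₀ : ℕ := n.natAbs - 1 with hk₀
    have hna : 1 ≤ n.natAbs := by omega
    have hk₀1 : (k₀ + 1 : ℕ) = n.natAbs := by omega
    have hterm : ∀ k : ℕ, (Real.sqrt (2 / π) * Real.exp (-((k : ℝ) + 1) ^ 2 * t)) *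
        ∫ y in (-π)..π, Real.cos (((k : ℝ) + 1) * (x - y)) * Real.cos ((n : ℝ) * y)
        = if k = k₀ then Real.sqrt (2 * π) * (Real.exp (-(n : ℝ) ^ 2 * t) * Real.cos ((n : ℝ) * x)) else 0 := by
      intro k
      rw [hcast k, int_cos_cos x (by exact_mod_cast Nat.succ_pos k) n]
      by_cases hk : k = k₀
      · subst hk
        rw [if_pos, if_pos rfl]
        · have habs : (((k₀ + 1 : ℕ) : ℤ) : ℝ) = |((n : ℝ))| := by
            rw [hk₀1]; push_cast [Nat.cast_natAbs]; norm_num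
          have hsq : ((((k₀ + 1 : ℕ) : ℤ) : ℝ)) ^ 2 = (n : ℝ) ^ 2 := by
            rw [habs, sq_abs]
          rw [hsq, ← sqrt_two_div_pi_mul_pi]
          ring
        · omega
      · rw [if_neg, if_neg hk]
        · ring
        · rintro (h | h)
          · apply hk
            have : n.natAbs = k + 1 := by omega
            omega
          · apply hk
            have : n.natAbs = k + 1 := by omega
            omega
    rw [tsum_congr hterm]
    rw [tsum_eq_single k₀ (fun k hk => by rw [if_neg hk])]
    rw [if_pos rfl]

lemma integral_G_sin {t : ℝ} (ht : 0 < t) (x : ℝ) (n : ℤ) :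
    ∫ y in (-π)..π, G t (x - y) * Real.sin ((n : ℝ) * y)
      = Real.sqrt (2 * π) * (Real.exp (-(n : ℝ) ^ 2 * t) * Real.sin ((n : ℝ) * x)) := by
  rw [integral_G_mul ht x (ψ := fun y => Real.sin ((n : ℝ) * y)) (by fun_prop)]
  have hcast : ∀ k : ℕ, ((k : ℝ) + 1) = (((k + 1 : ℕ) : ℤ) : ℝ) := fun k => by push_cast; ring
  have e1 : (∫ y in (-π)..π, 1 / Real.sqrt (2 * π) * Real.sin ((n : ℝ) * y)) = 0 := by
    rw [intervalIntegral.integral_const_mul]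
    rcases eq_or_ne n 0 with h0 | h0
    · subst h0; simp
    · have : ∀ y ∈ Set.uIcc (-π) π, Real.sin ((n : ℝ) * y) = Real.sin (0 + (n : ℝ) * y) :=
        fun y _ => by rw [zero_add]
      rw [intervalIntegral.integral_congr this, int_sin_c 0 h0]
      ring
  rw [e1, zero_add]
  rcases eq_or_ne n 0 with h0 | h0
  · subst h0
    have e2 : ∀ k : ℕ, (Real.sqrt (2 / π) * Real.exp (-((k : ℝ) + 1) ^ 2 * t)) *
        ∫ y in (-π)..π, Real.cos (((k : ℝ) + 1) * (x - y)) * Real.sin (((0:ℤ) : ℝ) * y) = 0 := by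
      intro k
      rw [hcast k, int_cos_sin x (by exact_mod_cast Nat.succ_pos k) 0, if_neg (by omega)]
      ring
    rw [tsum_congr e2, tsum_zero]
    simp
  · set k₀ : ℕ := n.natAbs - 1 with hk₀
    have hna : 1 ≤ n.natAbs := by omega
    have hk₀1 : (k₀ + 1 : ℕ) = n.natAbs := by omega
    have hterm : ∀ k : ℕ, (Real.sqrt (2 / π) * Real.exp (-((k : ℝ) + 1) ^ 2 * t)) *
        ∫ y in (-π)..π, Real.cos (((k : ℝ) + 1) * (x - y)) * Real.sin ((n : ℝ) * y)
        = if k = k₀ then Real.sqrt (2 * π) * (Real.exp (-(n : ℝ) ^ 2 * t) * Real.sin ((n : ℝ) * x)) else 0 := by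
      intro k
      rw [hcast k, int_cos_sin x (by exact_mod_cast Nat.succ_pos k) n]
      by_cases hk : k = k₀
      · subst hk
        rw [if_pos, if_pos rfl]
        · have habs : (((k₀ + 1 : ℕ) : ℤ) : ℝ) = |((n : ℝ))| := by
            rw [hk₀1]; push_cast [Nat.cast_natAbs]; norm_num
          have hsq : ((((k₀ + 1 : ℕ) : ℤ) : ℝ)) ^ 2 = (n : ℝ) ^ 2 := by
            rw [habs, sq_abs]
          rw [hsq, ← sqrt_two_div_pi_mul_pi]
          ring
        · omega
      · rw [if_neg, if_neg hk]
        · ring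
        · rintro (h | h)
          · apply hk
            have : n.natAbs = k + 1 := by omega
            omega
          · apply hk
            have : n.natAbs = k + 1 := by omega
            omega
    rw [tsum_congr hterm]
    rw [tsum_eq_single k₀ (fun k hk => by rw [if_neg hk])]
    rw [if_pos rfl]

lemma summable_exp_nat {t : ℝ} (ht : 0 < t) :
    Summable fun n : ℕ => Real.exp (-(n : ℝ) ^ 2 * t) := by
  rw [← summable_nat_add_iff 1]
  convert summable_exp_aux ht using 2 with k
  · rfl
  push_cast
  ring

lemma summable_f_int {t : ℝ} (ht : 0 < t) :
    Summable fun n : ℤ => Real.exp (-(n : ℝ) ^ 2 * t) := by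
  apply Summable.of_nat_of_neg
  · convert summable_exp_nat ht using 2 with n
    · rfl
    try push_cast
    try ring_nf
  · convert summable_exp_nat ht using 2 with n
    · rfl
    try push_cast
    try ring_nf

lemma sqrt_two_pi_mul_G {t : ℝ} (ht : 0 < t) (x : ℝ) :
    Real.sqrt (2 * π) * G t x
      = ∑' n : ℤ, Real.exp (-(n : ℝ) ^ 2 * t) * Real.cos ((n : ℝ) * x) := by
  set f : ℤ → ℝ := fun n => Real.exp (-(n : ℝ) ^ 2 * t) * Real.cos ((n : ℝ) * x) with hf
  have hbnd : ∀ n : ℤ, ‖f n‖ ≤ Real.exp (-(n : ℝ) ^ 2 * t) := by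
    intro n
    rw [hf, Real.norm_eq_abs, abs_mul, abs_of_nonneg (Real.exp_pos _).le]
    calc Real.exp (-(n : ℝ) ^ 2 * t) * |Real.cos ((n : ℝ) * x)|
        ≤ Real.exp (-(n : ℝ) ^ 2 * t) * 1 :=
          mul_le_mul_of_nonneg_left (Real.abs_cos_le_one _) (Real.exp_pos _).le
      _ = _ := mul_one _
  have hnat : Summable fun n : ℕ => f n := by
    apply Summable.of_norm_bounded (summable_exp_nat ht)
    intro n
    calc ‖f n‖ ≤ Real.exp (-((n : ℤ) : ℝ) ^ 2 * t) := hbnd n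
      _ = Real.exp (-(n : ℝ) ^ 2 * t) := by push_cast; try ring_nf
  have heven : ∀ n : ℕ, f (-((n : ℤ) + 1)) = f ((n : ℤ) + 1) := by
    intro n
    rw [hf]
    push_cast
    rw [show (-((n : ℝ) + 1)) * x = -(((n : ℝ) + 1) * x) by ring, Real.cos_neg, neg_sq]
  have hnat1 : Summable fun n : ℕ => f ((n : ℤ) + 1) := by
    have := (summable_nat_add_iff (f := fun n : ℕ => f n) 1).mpr hnat
    convert this using 2 with n
    · rfl
    try push_cast
    try ring_nf
  have hneg : Summable fun n : ℕ => f (-((n : ℤ) + 1)) := by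
    convert hnat1 using 2 with n
    exact heven n
  rw [tsum_of_nat_of_neg_add_one hnat hneg, tsum_congr heven, hnat.tsum_eq_zero_add]
  have hshift : ∑' n : ℕ, f ((n + 1 : ℕ) : ℤ) = ∑' n : ℕ, f ((n : ℤ) + 1) :=
    tsum_congr fun n => by push_cast; ring_nf
  rw [hshift]
  have hf0 : f 0 = 1 := by simp [hf]
  rw [Nat.cast_zero, hf0]
  -- now the left side
  unfold G
  rw [mul_add]
  have hsne : Real.sqrt (2 * π) ≠ 0 := by
    have := Real.sqrt_pos.mpr (show (0:ℝ) < 2 * π by positivity)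
    linarith
  have c1 : Real.sqrt (2 * π) * (1 / Real.sqrt (2 * π)) = 1 := by
    rw [mul_one_div, div_self hsne]
  have hterm : ∀ k : ℕ, Real.sqrt (2 / π) * Real.exp (-((k : ℝ) + 1) ^ 2 * t) *
      Real.cos (((k : ℝ) + 1) * x) = Real.sqrt (2 / π) * f ((k : ℤ) + 1) := by
    intro k
    rw [hf]
    push_cast
    ring
  rw [tsum_congr hterm, tsum_mul_left, c1]
  have c2 : Real.sqrt (2 * π) * Real.sqrt (2 / π) = 2 := by
    rw [← Real.sqrt_mul (by positivity)]
    rw [show (2 * π) * (2 / π) = 4 by field_simp; ring]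
    rw [show (4 : ℝ) = 2 ^ 2 by norm_num, Real.sqrt_sq (by norm_num)]
  rw [← mul_assoc, c2]
  ring

lemma tsum_int_nonneg {t : ℝ} (ht : 0 < t) (x : ℝ) :
    0 ≤ ∑' n : ℤ, Real.exp (-(n : ℝ) ^ 2 * t) * Real.cos ((n : ℝ) * x) := by
  set g : ℤ → ℂ := fun n =>
    Complex.exp (((-(n : ℝ) ^ 2 * t : ℝ) : ℂ) + (((n : ℝ) * x : ℝ) : ℂ) * Complex.I) with hg
  have hnorm : ∀ n : ℤ, ‖g n‖ = Real.exp (-(n : ℝ) ^ 2 * t) := by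
    intro n
    rw [hg, Complex.norm_exp, Complex.add_re, Complex.ofReal_re,
      Complex.re_ofReal_mul, Complex.I_re, mul_zero, add_zero]
  have hgsum : Summable g := by
    apply Summable.of_norm
    exact (summable_f_int ht).congr fun n => (hnorm n).symm
  have ha : (0 : ℝ) < ((t / π : ℝ) : ℂ).re := by
    simpa using div_pos ht Real.pi_pos
  have key := Complex.tsum_exp_neg_quadratic ha (Complex.I * (x : ℂ) / (2 * π))
  have hπ : (π : ℂ) ≠ 0 := by exact_mod_cast Real.pi_ne_zero
  have hπr : (π : ℝ) ≠ 0 := Real.pi_ne_zero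
  have ht' : (t : ℂ) ≠ 0 := by exact_mod_cast ht.ne'
  have htr : (t : ℝ) ≠ 0 := ht.ne'
  have hexp1 : ∀ n : ℤ,
      -(π : ℂ) * ((t / π : ℝ) : ℂ) * (n : ℂ) ^ 2
        + 2 * (π : ℂ) * (Complex.I * (x : ℂ) / (2 * π)) * (n : ℂ)
      = ((-(n : ℝ) ^ 2 * t : ℝ) : ℂ) + (((n : ℝ) * x : ℝ) : ℂ) * Complex.I := by
    intro n
    push_cast
    field_simp
  have hexp2 : ∀ n : ℤ,
      -(π : ℂ) / ((t / π : ℝ) : ℂ)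
          * ((n : ℂ) + Complex.I * (Complex.I * (x : ℂ) / (2 * π))) ^ 2
      = ((-(π ^ 2 / t) * ((n : ℝ) - x / (2 * π)) ^ 2 : ℝ) : ℂ) := by
    intro n
    have hIb : Complex.I * (Complex.I * (x : ℂ) / (2 * π)) = -((x : ℂ) / (2 * π)) := by
      rw [show Complex.I * (Complex.I * (x : ℂ) / (2 * π))
          = (Complex.I * Complex.I) * ((x : ℂ) / (2 * π)) by ring, Complex.I_mul_I]
      ring
    rw [hIb]
    push_cast
    field_simp
    ring
  have hlhs : (∑' n : ℤ, Complex.exp (-(π : ℂ) * ((t / π : ℝ) : ℂ) * (n : ℂ) ^ 2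
      + 2 * (π : ℂ) * (Complex.I * (x : ℂ) / (2 * π)) * (n : ℂ))) = ∑' n, g n :=
    tsum_congr fun n => by rw [hexp1 n]
  have hcpow : ((t / π : ℝ) : ℂ) ^ (1 / 2 : ℂ) = (((t / π) ^ ((1 : ℝ) / 2) : ℝ) : ℂ) := by
    rw [Complex.ofReal_cpow (div_pos ht Real.pi_pos).le]
    norm_num
  have hrhs : (1 / ((t / π : ℝ) : ℂ) ^ (1 / 2 : ℂ))
        * ∑' n : ℤ, Complex.exp (-(π : ℂ) / ((t / π : ℝ) : ℂ)
          * ((n : ℂ) + Complex.I * (Complex.I * (x : ℂ) / (2 * π))) ^ 2)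
      = (((1 / ((t / π) ^ ((1 : ℝ) / 2)))
          * ∑' n : ℤ, Real.exp (-(π ^ 2 / t) * ((n : ℝ) - x / (2 * π)) ^ 2) : ℝ) : ℂ) := by
    rw [Complex.ofReal_mul, Complex.ofReal_tsum]
    congr 1
    · rw [hcpow]
      push_cast
      ring
    · refine tsum_congr fun n => ?_
      rw [hexp2 n, Complex.ofReal_exp]
  rw [hlhs, hrhs] at key
  have hre : (∑' n, g n).re = ∑' n : ℤ, Real.exp (-(n : ℝ) ^ 2 * t) * Real.cos ((n : ℝ) * x) := by
    rw [Complex.re_tsum hgsum]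
    refine tsum_congr fun n => ?_
    rw [hg]
    simp only
    rw [Complex.exp_add, ← Complex.ofReal_exp, Complex.re_ofReal_mul,
      Complex.exp_ofReal_mul_I_re]
  rw [← hre, key, Complex.ofReal_re]
  have h1 : (0 : ℝ) ≤ 1 / ((t / π) ^ ((1 : ℝ) / 2)) := by positivity
  have h2 : (0 : ℝ) ≤ ∑' n : ℤ, Real.exp (-(π ^ 2 / t) * ((n : ℝ) - x / (2 * π)) ^ 2) :=
    tsum_nonneg fun n => (Real.exp_pos _).le
  exact mul_nonneg h1 h2

lemma G_nonneg {t : ℝ} (ht : 0 < t) (x : ℝ) : 0 ≤ G t x := by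
  have h := tsum_int_nonneg ht x
  rw [← sqrt_two_pi_mul_G ht x] at h
  have hs : 0 < Real.sqrt (2 * π) := Real.sqrt_pos.mpr (by positivity)
  nlinarith

lemma integral_G_one {t : ℝ} (ht : 0 < t) (x : ℝ) :
    ∫ y in (-π)..π, G t (x - y) = Real.sqrt (2 * π) := by
  have h := integral_G_cos ht x 0
  simp only [Int.cast_zero, zero_mul, Real.cos_zero, mul_one, neg_zero, zero_pow,
    Real.exp_zero] at h
  simpa using h

lemma abs_integral_le {t : ℝ} (ht : 0 < t) (x : ℝ) {ψ : ℝ → ℝ} (hψ : Continuous ψ)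
    {M : ℝ} (hM : ∀ y, |ψ y| ≤ M) :
    |∫ y in (-π)..π, G t (x - y) * ψ y| ≤ Real.sqrt (2 * π) * M := by
  have hG : Continuous fun y => G t (x - y) :=
    (continuous_G ht).comp (continuous_const.sub continuous_id)
  have h1 := intervalIntegral.abs_integral_le_integral_abs
    (f := fun y => G t (x - y) * ψ y) (μ := volume) neg_pi_le_pi
  have h2 : (∫ y in (-π)..π, |G t (x - y) * ψ y|) ≤ ∫ y in (-π)..π, G t (x - y) * M := by
    apply intervalIntegral.integral_mono_on neg_pi_le_pi
      (((hG.mul hψ).abs).intervalIntegrable _ _)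
      ((hG.mul continuous_const).intervalIntegrable _ _)
    intro y _
    show |G t (x - y) * ψ y| ≤ G t (x - y) * M
    rw [abs_mul, abs_of_nonneg (G_nonneg ht _)]
    exact mul_le_mul_of_nonneg_left (hM y) (G_nonneg ht _)
  have h3 : (∫ y in (-π)..π, G t (x - y) * M) = Real.sqrt (2 * π) * M := by
    rw [intervalIntegral.integral_mul_const, integral_G_one ht x]
  linarith

lemma exists_trig_approx (φ : ℝ → ℝ) (hcont : Continuous φ)
    (hper : ∀ x, φ (x + 2 * π) = φ x) {ε : ℝ} (hε : 0 < ε) :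
    ∃ c : ℤ →₀ ℂ, ∀ x : ℝ,
      |φ x - ∑ n ∈ c.support, ((c n).re * Real.cos ((n : ℝ) * x)
        - (c n).im * Real.sin ((n : ℝ) * x))| ≤ ε := by
  haveI : Fact (0 < 2 * π) := ⟨by positivity⟩
  have hper' : Function.Periodic φ (2 * π) := hper
  let F : C(AddCircle (2 * π), ℂ) :=
    ⟨fun z => ((hper'.lift z : ℝ) : ℂ),
      Complex.continuous_ofReal.comp (continuous_coinduced_dom.mpr hcont)⟩
  have hmem : F ∈ closure ((Submodule.span ℂ (Set.range (fourier (T := 2 * π)))) : Set _) := by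
    rw [← Submodule.topologicalClosure_coe, span_fourier_closure_eq_top]
    trivial
  obtain ⟨g, hgmem, hgd⟩ := Metric.mem_closure_iff.mp hmem ε hε
  obtain ⟨c, hc⟩ := Finsupp.mem_span_range_iff_exists_finsupp.mp hgmem
  refine ⟨c, fun x => ?_⟩
  have hval : g ((x : ℝ) : AddCircle (2 * π))
      = ∑ n ∈ c.support, c n * Complex.exp ((((n : ℝ) * x : ℝ) : ℂ) * Complex.I) := by
    rw [← hc, Finsupp.sum, ContinuousMap.sum_apply]
    refine Finset.sum_congr rfl fun n _ => ?_
    rw [ContinuousMap.smul_apply, smul_eq_mul]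
    congr 1
    rw [fourier_coe_apply]
    congr 1
    push_cast
    have hπ : (π : ℂ) ≠ 0 := by exact_mod_cast Real.pi_ne_zero
    field_simp
  have hFx : F ((x : ℝ) : AddCircle (2 * π)) = ((φ x : ℝ) : ℂ) := by
    show ((hper'.lift _ : ℝ) : ℂ) = _
    rw [hper'.lift_coe]
  have hdist : dist (F ((x : ℝ) : AddCircle (2 * π))) (g ((x : ℝ) : AddCircle (2 * π))) ≤ ε :=
    le_trans (ContinuousMap.dist_apply_le_dist _) hgd.le
  rw [hFx, hval, Complex.dist_eq] at hdist
  have hre : (∑ n ∈ c.support, c n * Complex.exp ((((n : ℝ) * x : ℝ) : ℂ) * Complex.I)).re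
      = ∑ n ∈ c.support, ((c n).re * Real.cos ((n : ℝ) * x)
          - (c n).im * Real.sin ((n : ℝ) * x)) := by
    rw [Complex.re_sum]
    refine Finset.sum_congr rfl fun n _ => ?_
    rw [Complex.mul_re, Complex.exp_ofReal_mul_I_re, Complex.exp_ofReal_mul_I_im]
  calc |φ x - ∑ n ∈ c.support, ((c n).re * Real.cos ((n : ℝ) * x)
          - (c n).im * Real.sin ((n : ℝ) * x))|
      = |(((φ x : ℝ) : ℂ) - ∑ n ∈ c.support,
          c n * Complex.exp ((((n : ℝ) * x : ℝ) : ℂ) * Complex.I)).re| := by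
        rw [Complex.sub_re, Complex.ofReal_re, hre]
    _ ≤ ‖(((φ x : ℝ) : ℂ) - ∑ n ∈ c.support,
          c n * Complex.exp ((((n : ℝ) * x : ℝ) : ℂ) * Complex.I))‖ := Complex.abs_re_le_norm _
    _ ≤ ε := hdist

lemma integral_G_P {t : ℝ} (ht : 0 < t) (c : ℤ →₀ ℂ) (x : ℝ) :
    ∫ y in (-π)..π, G t (x - y) * (∑ n ∈ c.support,
        ((c n).re * Real.cos ((n : ℝ) * y) - (c n).im * Real.sin ((n : ℝ) * y)))
      = Real.sqrt (2 * π) * ∑ n ∈ c.support, Real.exp (-(n : ℝ) ^ 2 * t) *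
          ((c n).re * Real.cos ((n : ℝ) * x) - (c n).im * Real.sin ((n : ℝ) * x)) := by
  have hG : Continuous fun y => G t (x - y) :=
    (continuous_G ht).comp (continuous_const.sub continuous_id)
  have hsplit : ∀ y ∈ Set.uIcc (-π) π, G t (x - y) * (∑ n ∈ c.support,
      ((c n).re * Real.cos ((n : ℝ) * y) - (c n).im * Real.sin ((n : ℝ) * y)))
      = ∑ n ∈ c.support, ((c n).re * (G t (x - y) * Real.cos ((n : ℝ) * y))
          - (c n).im * (G t (x - y) * Real.sin ((n : ℝ) * y))) := by
    intro y _
    rw [Finset.mul_sum]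
    refine Finset.sum_congr rfl fun n _ => ?_
    ring
  rw [intervalIntegral.integral_congr hsplit,
    intervalIntegral.integral_finset_sum (f := fun n y => (c n).re * (G t (x - y) * Real.cos ((n : ℝ) * y))
        - (c n).im * (G t (x - y) * Real.sin ((n : ℝ) * y))) (fun n _ =>
      Continuous.intervalIntegrable
        ((continuous_const.mul (hG.mul (by fun_prop))).sub
          (continuous_const.mul (hG.mul (by fun_prop)))) _ _),
    Finset.mul_sum]
  refine Finset.sum_congr rfl fun n _ => ?_
  rw [intervalIntegral.integral_sub (f := fun y => (c n).re * (G t (x - y) * Real.cos ((n : ℝ) * y)))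
      (g := fun y => (c n).im * (G t (x - y) * Real.sin ((n : ℝ) * y)))
      (Continuous.intervalIntegrable (continuous_const.mul (hG.mul (by fun_prop))) _ _)
      (Continuous.intervalIntegrable (continuous_const.mul (hG.mul (by fun_prop))) _ _),
    intervalIntegral.integral_const_mul, intervalIntegral.integral_const_mul,
    integral_G_cos ht x n, integral_G_sin ht x n]
  ring

end Stmt11

/-- `(2π)^{-1/2} G(t,·)` is an approximate identity: convolution with a continuous
`2π`-periodic `φ` converges uniformly to `φ` as `t → 0⁺`. -/
theorem stmt_11 (φ : ℝ → ℝ) (hcont : Continuous φ)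
    (hper : ∀ x, φ (x + 2 * Real.pi) = φ x) :
    TendstoUniformly
      (fun t : ℝ => fun x : ℝ =>
        (2 * Real.pi) ^ (-(1 / 2) : ℝ) * ∫ y in (-Real.pi)..Real.pi, G t (x - y) * φ y)
      φ (nhdsWithin 0 (Set.Ioi 0)) := by
  rw [Metric.tendstoUniformly_iff]
  intro ε hε
  have hε4 : 0 < ε / 4 := by linarith
  obtain ⟨c, hc⟩ := Stmt11.exists_trig_approx φ hcont hper hε4
  set P : ℝ → ℝ := fun y => ∑ n ∈ c.support,
    ((c n).re * Real.cos ((n : ℝ) * y) - (c n).im * Real.sin ((n : ℝ) * y)) with hP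
  have hPcont : Continuous P := continuous_finset_sum _ fun n _ => by fun_prop
  set w : ℤ → ℝ := fun n => |(c n).re| + |(c n).im| with hw
  set Q : ℝ → ℝ := fun s => ∑ n ∈ c.support,
    w n * |Real.exp (-(n : ℝ) ^ 2 * s) - 1| with hQ
  have hQcont : Continuous Q := by
    refine continuous_finset_sum _ fun n _ => continuous_const.mul ?_
    exact ((Real.continuous_exp.comp (by fun_prop)).sub continuous_const).abs
  have hQ00 : Q 0 = 0 := by
    simp [hQ]
  have hQ0 : Filter.Tendsto Q (nhdsWithin 0 (Set.Ioi 0)) (nhds 0) := by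
    have h := (hQcont.tendsto 0).mono_left
      (nhdsWithin_le_nhds (s := Set.Ioi (0:ℝ)))
    rwa [hQ00] at h
  have hA0 : (0:ℝ) ≤ (2 * Real.pi) ^ (-(1 / 2) : ℝ) := by positivity
  have hfact : (2 * Real.pi) ^ (-(1 / 2) : ℝ) * Real.sqrt (2 * Real.pi) = 1 := by
    rw [Real.rpow_neg (by positivity), Real.sqrt_eq_rpow]
    exact inv_mul_cancel₀ (by positivity)
  filter_upwards [hQ0.eventually_lt_const hε4, self_mem_nhdsWithin] with t hQt ht
  intro x
  have ht' : (0:ℝ) < t := ht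
  have hG : Continuous fun y => G t (x - y) :=
    (Stmt11.continuous_G ht').comp (continuous_const.sub continuous_id)
  set S : ℝ := ∑ n ∈ c.support, Real.exp (-(n : ℝ) ^ 2 * t) *
    ((c n).re * Real.cos ((n : ℝ) * x) - (c n).im * Real.sin ((n : ℝ) * x)) with hS
  set A : ℝ := (2 * Real.pi) ^ (-(1 / 2) : ℝ) with hA
  have hsplit : (∫ y in (-Real.pi)..Real.pi, G t (x - y) * φ y)
      = (∫ y in (-Real.pi)..Real.pi, G t (x - y) * (φ y - P y))
        + ∫ y in (-Real.pi)..Real.pi, G t (x - y) * P y := by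
    rw [← intervalIntegral.integral_add (f := fun y => G t (x - y) * (φ y - P y))
      (g := fun y => G t (x - y) * P y)
      ((hG.mul (hcont.sub hPcont)).intervalIntegrable _ _)
      ((hG.mul hPcont).intervalIntegrable _ _)]
    refine intervalIntegral.integral_congr fun y _ => ?_
    ring
  have hF : A * ∫ y in (-Real.pi)..Real.pi, G t (x - y) * φ y
      = A * (∫ y in (-Real.pi)..Real.pi, G t (x - y) * (φ y - P y)) + S := by
    rw [hsplit, mul_add]
    simp only [hP]
    rw [Stmt11.integral_G_P ht' c x, ← mul_assoc, hfact, one_mul, hS]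
  have hbound1 : |∫ y in (-Real.pi)..Real.pi, G t (x - y) * (φ y - P y)|
      ≤ Real.sqrt (2 * Real.pi) * (ε / 4) :=
    Stmt11.abs_integral_le ht' x (hcont.sub hPcont) fun y => hc y
  have hbound1' : |A * ∫ y in (-Real.pi)..Real.pi, G t (x - y) * (φ y - P y)| ≤ ε / 4 := by
    rw [abs_mul, abs_of_nonneg hA0]
    calc A * |∫ y in (-Real.pi)..Real.pi, G t (x - y) * (φ y - P y)|
        ≤ A * (Real.sqrt (2 * Real.pi) * (ε / 4)) :=
          mul_le_mul_of_nonneg_left hbound1 hA0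
      _ = (A * Real.sqrt (2 * Real.pi)) * (ε / 4) := by ring
      _ = ε / 4 := by rw [hA, hfact]; ring
  have hPS : |P x - S| ≤ Q t := by
    rw [hP, hS, hQ, ← Finset.sum_sub_distrib]
    refine le_trans (Finset.abs_sum_le_sum_abs _ _) (Finset.sum_le_sum fun n _ => ?_)
    have he : ((c n).re * Real.cos ((n : ℝ) * x) - (c n).im * Real.sin ((n : ℝ) * x))
        - Real.exp (-(n : ℝ) ^ 2 * t) *
          ((c n).re * Real.cos ((n : ℝ) * x) - (c n).im * Real.sin ((n : ℝ) * x))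
        = (Real.exp (-(n : ℝ) ^ 2 * t) - 1) *
          (-((c n).re * Real.cos ((n : ℝ) * x) - (c n).im * Real.sin ((n : ℝ) * x))) := by
      ring
    rw [he, abs_mul, abs_neg]
    rw [show w n * |Real.exp (-(n : ℝ) ^ 2 * t) - 1|
        = |Real.exp (-(n : ℝ) ^ 2 * t) - 1| * w n by ring]
    refine mul_le_mul_of_nonneg_left ?_ (abs_nonneg _)
    have h1 : |(c n).re * Real.cos ((n : ℝ) * x)| ≤ |(c n).re| := by
      rw [abs_mul]
      exact mul_le_of_le_one_right (abs_nonneg _) (Real.abs_cos_le_one _)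
    have h2 : |(c n).im * Real.sin ((n : ℝ) * x)| ≤ |(c n).im| := by
      rw [abs_mul]
      exact mul_le_of_le_one_right (abs_nonneg _) (Real.abs_sin_le_one _)
    calc |(c n).re * Real.cos ((n : ℝ) * x) - (c n).im * Real.sin ((n : ℝ) * x)|
        ≤ |(c n).re * Real.cos ((n : ℝ) * x)| + |(c n).im * Real.sin ((n : ℝ) * x)| :=
          abs_sub _ _
      _ ≤ w n := by rw [hw]; exact add_le_add h1 h2
  rw [Real.dist_eq]
  calc |φ x - A * ∫ y in (-Real.pi)..Real.pi, G t (x - y) * φ y|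
      = |(φ x - P x) + ((P x - S)
          + (-(A * ∫ y in (-Real.pi)..Real.pi, G t (x - y) * (φ y - P y))))| := by
        rw [hF]
        congr 1
        ring
    _ ≤ |φ x - P x| + |(P x - S)
          + (-(A * ∫ y in (-Real.pi)..Real.pi, G t (x - y) * (φ y - P y)))| := abs_add_le _ _
    _ ≤ |φ x - P x| + (|P x - S|
          + |A * ∫ y in (-Real.pi)..Real.pi, G t (x - y) * (φ y - P y)|) := by
        have := abs_add_le (P x - S)
          (-(A * ∫ y in (-Real.pi)..Real.pi, G t (x - y) * (φ y - P y)))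
        rw [abs_neg] at this
        linarith
    _ < ε := by
        have h1 : |φ x - P x| ≤ ε / 4 := hc x
        linarith
end
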